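/- Suppose L is an unbounded operator on a Hilbert space H whose eigenvectors {z_k} form a (Schauder) basis of H with eigenvalues {λ_k} having no accumulation point in ℂ. If f ∈ H satisfies ‖Lⁿ f‖ ≤ K Cⁿ ‖f‖ for all n ≥ 0 and some constants K, C, then f lies in the span of finitely many z_k; specifically f ∈ span{z_k : |λ_k| ≤ C'} for some finite C'. -/

import Mathlib

open Filter

/-- Suppose the eigenvectors `{z_k}` of a (possibly unbounded, closed) operator `L`,
diagonal in the orthonormal basis `{z_k}` with distinct eigenvalues `{λ_k}` satisfying
`|λ_k| → ∞` (no accumulation points), form an orthonormal basis of `H`. If `f` is a bounded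
analytic vector, i.e. `f ∈ ∩ₙ D(Lⁿ)` with `‖Lⁿ f‖ ≤ K Cⁿ ‖f‖` for all `n` (the iterates
`Lⁿ f` being witnessed by the chain `g`), then `f` lies in the span of finitely many `z_k`:
`f ∈ span{z_k : |λ_k| ≤ C'}` for some finite `C'`. -/
theorem stmt_11 {H : Type*} [NormedAddCommGroup H] [InnerProductSpace ℂ H] [CompleteSpace H]
    (z : ℕ → H) (hON : Orthonormal ℂ z)
    (hcomp : (Submodule.span ℂ (Set.range z)).topologicalClosure = ⊤)
    (lam : ℕ → ℂ) (hinj : Function.Injective lam)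
    (htends : Tendsto (fun k => ‖lam k‖) atTop atTop)
    (D : Submodule ℂ H) (L : D →ₗ[ℂ] H)
    (hclosed : IsClosed {p : H × H | ∃ x : D, p = ((x : H), L x)})
    (heig : ∀ k, ∃ hk : z k ∈ D, L ⟨z k, hk⟩ = lam k • z k)
    (hdiag : ∀ (x : D) (j : ℕ), @inner ℂ _ _ (z j) (L x) = lam j * @inner ℂ _ _ (z j) (x : H))
    (f : H) (K C : ℝ)
    (g : ℕ → H) (hg0 : g 0 = f) (hgD : ∀ n, g n ∈ D)
    (hgL : ∀ n, L ⟨g n, hgD n⟩ = g (n + 1))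
    (hbound : ∀ n, ‖g n‖ ≤ K * C ^ n * ‖f‖) :
    ∃ C' : ℝ, f ∈ Submodule.span ℂ {x : H | ∃ k, ‖lam k‖ ≤ C' ∧ x = z k} := by
  by_cases hf0 : f = 0
  · exact ⟨0, hf0 ▸ (Submodule.span ℂ _).zero_mem⟩
  have hfpos : 0 < ‖f‖ := norm_pos_iff.mpr hf0
  -- K ≥ 1
  have hK : 1 ≤ K := by
    have := hbound 0
    simp only [pow_zero, mul_one] at this
    nlinarith [hg0 ▸ this]
  set C' : ℝ := |C| with hC'
  have hC'0 : 0 ≤ C' := abs_nonneg C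
  -- inner product recursion
  have key : ∀ n j, (inner ℂ (z j) (g n) : ℂ) = lam j ^ n * inner ℂ (z j) f := by
    intro n
    induction n with
    | zero => intro j; simp [hg0]
    | succ n ih =>
      intro j
      have h1 : g (n + 1) = L ⟨g n, hgD n⟩ := (hgL n).symm
      rw [h1, hdiag ⟨g n, hgD n⟩ j]
      simp only [ih j]
      ring
  -- coefficients vanish for large eigenvalues
  have hvanish : ∀ j, C' < ‖lam j‖ → (inner ℂ (z j) f : ℂ) = 0 := by
    intro j hj
    have hlampos : 0 < ‖lam j‖ := lt_of_le_of_lt hC'0 hj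
    have hb : ∀ n : ℕ, ‖(inner ℂ (z j) f : ℂ)‖ ≤ K * ‖f‖ * (C' / ‖lam j‖) ^ n := by
      intro n
      have h1 : ‖lam j‖ ^ n * ‖(inner ℂ (z j) f : ℂ)‖ = ‖(inner ℂ (z j) (g n) : ℂ)‖ := by
        rw [key n j]
        simp [map_pow]
      have h2 : ‖(inner ℂ (z j) (g n) : ℂ)‖ ≤ ‖g n‖ := by
        calc ‖(inner ℂ (z j) (g n) : ℂ)‖ ≤ ‖z j‖ * ‖g n‖ := norm_inner_le_norm _ _
          _ = ‖g n‖ := by rw [hON.1 j, one_mul]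
      have h3 : K * C ^ n * ‖f‖ ≤ K * C' ^ n * ‖f‖ := by
        have hcc : C ^ n ≤ C' ^ n := by
          calc C ^ n ≤ |C ^ n| := le_abs_self _
            _ = C' ^ n := by rw [abs_pow]
        have hK0 : (0:ℝ) ≤ K := le_trans zero_le_one hK
        exact mul_le_mul_of_nonneg_right
          (mul_le_mul_of_nonneg_left hcc hK0) hfpos.le
      have h4 : ‖lam j‖ ^ n * ‖(inner ℂ (z j) f : ℂ)‖ ≤ K * C' ^ n * ‖f‖ :=
        h1 ▸ le_trans h2 (le_trans (hbound n) h3)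
      have hpow : 0 < ‖lam j‖ ^ n := pow_pos hlampos n
      rw [div_pow]
      rw [← sub_nonneg] at h4 ⊢
      have : K * ‖f‖ * (C' ^ n / ‖lam j‖ ^ n) - ‖(inner ℂ (z j) f : ℂ)‖
          = (K * C' ^ n * ‖f‖ - ‖lam j‖ ^ n * ‖(inner ℂ (z j) f : ℂ)‖) / ‖lam j‖ ^ n := by
        field_simp
      rw [this]
      positivity
    have hr : C' / ‖lam j‖ < 1 := (div_lt_one hlampos).mpr hj
    have hr0 : 0 ≤ C' / ‖lam j‖ := div_nonneg hC'0 hlampos.le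
    have hlim : Tendsto (fun n : ℕ => K * ‖f‖ * (C' / ‖lam j‖) ^ n) atTop (nhds 0) := by
      have := tendsto_pow_atTop_nhds_zero_of_lt_one hr0 hr
      simpa using (this.const_mul (K * ‖f‖))
    have : ‖(inner ℂ (z j) f : ℂ)‖ ≤ 0 :=
      le_of_tendsto_of_tendsto' tendsto_const_nhds hlim hb
    exact norm_eq_zero.mp (le_antisymm this (norm_nonneg _))
  -- finiteness of small eigenvalues
  obtain ⟨N, hN⟩ := (htends.eventually_gt_atTop C').exists_forall_of_atTop
  have hSfin : {k : ℕ | ‖lam k‖ ≤ C'}.Finite := by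
    apply Set.Finite.subset (Set.finite_Iio N)
    intro k hk
    by_contra hkN
    exact absurd (hN k (le_of_not_gt hkN)) (not_lt.mpr hk)
  -- finite sum expansion via orthogonality
  refine ⟨C', ?_⟩
  set S : Finset ℕ := hSfin.toFinset with hS
  set w : H := ∑ k ∈ S, (inner ℂ (z k) f : ℂ) • z k with hw
  have horth : ∀ j, (inner ℂ (z j) (f - w) : ℂ) = 0 := by
    intro j
    have hz : ∀ k, (inner ℂ (z j) (z k) : ℂ) = if j = k then 1 else 0 :=
      fun k => orthonormal_iff_ite.mp hON j k
    rw [inner_sub_right, hw, inner_sum]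
    simp only [inner_smul_right, hz, mul_ite, mul_one, mul_zero]
    rw [Finset.sum_ite_eq S j (fun k => (inner ℂ (z k) f : ℂ))]
    by_cases hjS : j ∈ S
    · simp [hjS]
    · have hjS' : ¬ ‖lam j‖ ≤ C' := by
        rwa [hS, Set.Finite.mem_toFinset] at hjS
      simp [hjS, hvanish j (lt_of_not_ge hjS')]
  have hmem : f - w ∈ (Submodule.span ℂ (Set.range z))ᗮ := by
    rw [Submodule.mem_orthogonal]
    intro u hu
    induction hu using Submodule.span_induction with
    | mem x hx => obtain ⟨j, rfl⟩ := hx; exact horth j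
    | zero => simp
    | add x y _ _ hx hy => rw [inner_add_left, hx, hy, add_zero]
    | smul c x _ hx => rw [inner_smul_left, hx, mul_zero]
  have hbot : (Submodule.span ℂ (Set.range z))ᗮ = ⊥ :=
    Submodule.topologicalClosure_eq_top_iff.mp hcomp
  have hfw : f = w := by
    have h0 : f - w = 0 := by rw [hbot] at hmem; simpa using hmem
    exact sub_eq_zero.mp h0
  rw [hfw, hw]
  apply Submodule.sum_mem
  intro k hk
  have hk' : ‖lam k‖ ≤ C' := by rwa [hS, Set.Finite.mem_toFinset] at hk
  exact Submodule.smul_mem _ _ (Submodule.subset_span ⟨k, hk', rfl⟩)
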